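/- Let p be a probability distribution on ℕ with p(0)>0, p(0)+p(1)<1, and μ(p)<1, and let g be its generating function with radius of convergence ρ. If ρ = +∞, or if ρ < +∞ and g'(ρ) ≥ 1, then for every A ⊆ ℕ with p(A)>0 there exists θ ∈ I_A with μ(p_{A,θ}) = 1 (i.e., p is generic for A). -/

import Mathlib

open scoped Classical

/-- The normalizing constant `c_A(θ)`. -/
noncomputable def cA (p : ℕ → ℝ) (A : Set ℕ) (θ : ℝ) : ℝ :=
  (θ - ∑' k : ℕ, (Aᶜ).indicator (fun k => θ ^ k * p k) k) /
    (θ * ∑' k : ℕ, A.indicator (fun k => θ ^ k * p k) k)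

/-- The modified offspring distribution `p_{A,θ}`. -/
noncomputable def pMod (p : ℕ → ℝ) (A : Set ℕ) (θ : ℝ) : ℕ → ℝ :=
  fun k => if k ∈ A then cA p A θ * θ ^ k * p k else θ ^ ((k : ℤ) - 1) * p k

/-- `I_A`: the set of `θ > 0` for which `p_{A,θ}` is a probability distribution. -/
def IA (p : ℕ → ℝ) (A : Set ℕ) : Set ℝ :=
  {θ | 0 < θ ∧ (∀ k, 0 ≤ pMod p A θ k) ∧ ∑' k, pMod p A θ k = 1}


noncomputable def Gs (p : ℕ → ℝ) (θ : ℝ) : ℝ := ∑' k : ℕ, p k * θ ^ k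
noncomputable def Hs (p : ℕ → ℝ) (θ : ℝ) : ℝ := ∑' k : ℕ, (k : ℝ) * p k * θ ^ k

lemma pow_slope_ineq : ∀ (k : ℕ) {a b : ℝ}, 0 ≤ a → a ≤ b →
    b * (b ^ k - a ^ k) ≤ (k : ℝ) * b ^ k * (b - a) := by
  intro k
  induction k with
  | zero => intro a b _ _; simp
  | succ n ih =>
    intro a b ha hab
    have hb : 0 ≤ b := ha.trans hab
    have h1 := ih ha hab
    have h2 : a ^ n ≤ b ^ n := pow_le_pow_left₀ ha hab n
    have hbn : 0 ≤ b ^ n := pow_nonneg hb n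
    have h3 := mul_le_mul_of_nonneg_left h1 hb
    have h4 := mul_le_mul_of_nonneg_left
      (mul_le_mul_of_nonneg_right h2 (sub_nonneg.mpr hab)) hb
    rw [pow_succ, pow_succ]
    push_cast
    nlinarith [h3, h4]

variable {p : ℕ → ℝ}

lemma summable_pow_of_le (hp : ∀ k, 0 ≤ p k) {r t : ℝ} (hr : 0 ≤ r) (hrt : r ≤ t)
    (hs : Summable fun k : ℕ => p k * t ^ k) : Summable fun k : ℕ => p k * r ^ k :=
  hs.of_nonneg_of_le (fun k => mul_nonneg (hp k) (pow_nonneg hr k))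
    (fun k => mul_le_mul_of_nonneg_left (pow_le_pow_left₀ hr hrt k) (hp k))

lemma summable_kpow_of_lt (hp : ∀ k, 0 ≤ p k) {r t : ℝ} (hr : 0 ≤ r) (hrt : r < t)
    (hs : Summable fun k : ℕ => p k * t ^ k) :
    Summable fun k : ℕ => (k : ℝ) * p k * r ^ k := by
  rcases eq_or_lt_of_le hr with h0 | h0
  · refine summable_of_sum_le (c := 0) (fun k => mul_nonneg (mul_nonneg (Nat.cast_nonneg k) (hp k))
      (pow_nonneg hr k)) (fun u => le_of_eq ?_)
    refine Finset.sum_eq_zero fun k _ => ?_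
    cases k with
    | zero => simp
    | succ n => simp [← h0]
  · have ht : 0 < t := h0.trans hrt
    set x : ℝ := r / t with hx
    have hx0 : 0 < x := div_pos h0 ht
    have hx1 : x < 1 := (div_lt_one ht).mpr hrt
    have hxs : Summable fun n : ℕ => (n : ℝ) ^ 1 * x ^ n :=
      summable_pow_mul_geometric_of_norm_lt_one 1 (by rw [Real.norm_eq_abs, abs_of_pos hx0]; exact hx1)
    have hxs' : Summable fun n : ℕ => (n : ℝ) * x ^ n := by simpa using hxs
    set C : ℝ := ∑' n : ℕ, (n : ℝ) * x ^ n with hC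
    have hCb : ∀ n : ℕ, (n : ℝ) * x ^ n ≤ C := fun n =>
      Summable.le_tsum hxs' n (fun j _ => mul_nonneg (Nat.cast_nonneg j) (pow_nonneg hx0.le j))
    refine Summable.of_nonneg_of_le
      (fun k => mul_nonneg (mul_nonneg (Nat.cast_nonneg k) (hp k)) (pow_nonneg hr k))
      (fun k => ?_) (hs.mul_left C)
    have hrk : r ^ k = x ^ k * t ^ k := by
      rw [← mul_pow, hx, div_mul_cancel₀ _ ht.ne']
    calc (k : ℝ) * p k * r ^ k = ((k : ℝ) * x ^ k) * (p k * t ^ k) := by rw [hrk]; ring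
      _ ≤ C * (p k * t ^ k) := by
          exact mul_le_mul_of_nonneg_right (hCb k) (mul_nonneg (hp k) (pow_nonneg ht.le k))

lemma summable_pow_of_kpow (hp : ∀ k, 0 ≤ p k) {r : ℝ} (hr : 0 ≤ r)
    (hs : Summable fun k : ℕ => (k : ℝ) * p k * r ^ k) :
    Summable fun k : ℕ => p k * r ^ k := by
  rw [← summable_nat_add_iff 1] at hs ⊢
  refine hs.of_nonneg_of_le (fun n => mul_nonneg (hp _) (pow_nonneg hr _)) (fun n => ?_)
  have h1 : (1 : ℝ) ≤ ((n + 1 : ℕ) : ℝ) := by exact_mod_cast Nat.one_le_iff_ne_zero.mpr n.succ_ne_zero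
  nlinarith [mul_nonneg (hp (n + 1)) (pow_nonneg hr (n + 1))]

lemma slope_ineq (hp : ∀ k, 0 ≤ p k) {a b : ℝ} (ha : 0 ≤ a) (hab : a ≤ b)
    (hsb : Summable fun k : ℕ => p k * b ^ k)
    (hsb2 : Summable fun k : ℕ => (k : ℝ) * p k * b ^ k) :
    b * (Gs p b - Gs p a) ≤ Hs p b * (b - a) := by
  have hsa : Summable fun k : ℕ => p k * a ^ k := summable_pow_of_le hp ha hab hsb
  have h1 : b * (Gs p b - Gs p a) = ∑' k : ℕ, b * (p k * b ^ k - p k * a ^ k) := by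
    rw [Gs, Gs, ← Summable.tsum_sub hsb hsa, tsum_mul_left]
  have h2 : Hs p b * (b - a) = ∑' k : ℕ, ((k : ℝ) * p k * b ^ k) * (b - a) := by
    rw [Hs, tsum_mul_right]
  rw [h1, h2]
  refine Summable.tsum_le_tsum (fun k => ?_) ((hsb.sub hsa).mul_left b) (hsb2.mul_right _)
  have h3 := pow_slope_ineq k ha hab
  nlinarith [mul_le_mul_of_nonneg_left h3 (hp k)]

noncomputable def SA (p : ℕ → ℝ) (A : Set ℕ) (θ : ℝ) : ℝ :=
  ∑' k : ℕ, A.indicator (fun k => θ ^ k * p k) k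

noncomputable def TA (p : ℕ → ℝ) (A : Set ℕ) (θ : ℝ) : ℝ :=
  ∑' k : ℕ, A.indicator (fun k => (k : ℝ) * (θ ^ k * p k)) k

noncomputable def FM (p : ℕ → ℝ) (A : Set ℕ) (θ : ℝ) : ℝ :=
  ((θ - SA p Aᶜ θ) / (θ * SA p A θ)) * TA p A θ + TA p Aᶜ θ / θ

lemma cA_eq (p : ℕ → ℝ) (A : Set ℕ) (θ : ℝ) :
    cA p A θ = (θ - SA p Aᶜ θ) / (θ * SA p A θ) := rfl

section mainlem

variable {p : ℕ → ℝ} {A : Set ℕ}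

-- pointwise decomposition of pMod
lemma pMod_eq (hθ : (0:ℝ) < θ) (k : ℕ) :
    pMod p A θ k = A.indicator (fun k => cA p A θ * (θ ^ k * p k)) k
      + (Aᶜ).indicator (fun k => (θ ^ k * p k) / θ) k := by
  by_cases hk : k ∈ A
  · rw [Set.indicator_of_mem hk, Set.indicator_of_notMem (by simpa using hk)]
    simp [pMod, hk, mul_assoc]
  · rw [Set.indicator_of_notMem hk, Set.indicator_of_mem (by simpa using hk)]
    simp only [pMod, hk, if_false]
    rw [zpow_sub₀ hθ.ne', zpow_one, zpow_natCast]
    ring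

lemma kpMod_eq (hθ : (0:ℝ) < θ) (k : ℕ) :
    (k : ℝ) * pMod p A θ k
      = A.indicator (fun k => cA p A θ * ((k : ℝ) * (θ ^ k * p k))) k
      + (Aᶜ).indicator (fun k => ((k : ℝ) * (θ ^ k * p k)) / θ) k := by
  by_cases hk : k ∈ A
  · rw [Set.indicator_of_mem hk, Set.indicator_of_notMem (by simpa using hk)]
    simp [pMod, hk]; ring
  · rw [Set.indicator_of_notMem hk, Set.indicator_of_mem (by simpa using hk)]
    simp only [pMod, hk, if_false]
    rw [zpow_sub₀ hθ.ne', zpow_one, zpow_natCast]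
    ring

lemma indicator_const_mul (B : Set ℕ) (c : ℝ) (f : ℕ → ℝ) :
    B.indicator (fun k => c * f k) = fun k => c * B.indicator f k := by
  funext k; by_cases hk : k ∈ B <;> simp [hk]

lemma indicator_div_const (B : Set ℕ) (c : ℝ) (f : ℕ → ℝ) :
    B.indicator (fun k => f k / c) = fun k => B.indicator f k / c := by
  funext k; by_cases hk : k ∈ B <;> simp [hk]

end mainlem

section mainlem2

variable {p : ℕ → ℝ} {A : Set ℕ}

lemma tsum_pMod (hθ : (0:ℝ) < θ) (hsθ : Summable fun k : ℕ => θ ^ k * p k) :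
    ∑' k : ℕ, pMod p A θ k = cA p A θ * SA p A θ + SA p Aᶜ θ / θ := by
  have hA := hsθ.indicator A
  have hC := hsθ.indicator Aᶜ
  calc ∑' k : ℕ, pMod p A θ k
      = ∑' k, (A.indicator (fun k => cA p A θ * (θ ^ k * p k)) k
          + (Aᶜ).indicator (fun k => (θ ^ k * p k) / θ) k) := tsum_congr (pMod_eq hθ)
    _ = (∑' k : ℕ, A.indicator (fun k => cA p A θ * (θ ^ k * p k)) k)
          + ∑' k : ℕ, (Aᶜ).indicator (fun k => (θ ^ k * p k) / θ) k := by
        refine Summable.tsum_add ?_ ?_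
        · rw [indicator_const_mul]; exact hA.mul_left _
        · rw [indicator_div_const]; exact hC.div_const _
    _ = cA p A θ * SA p A θ + SA p Aᶜ θ / θ := by
        rw [indicator_const_mul, indicator_div_const, tsum_mul_left, tsum_div_const]; rfl

lemma tsum_kpMod (hθ : (0:ℝ) < θ) (hsθ2 : Summable fun k : ℕ => (k : ℝ) * (θ ^ k * p k)) :
    ∑' k : ℕ, (k : ℝ) * pMod p A θ k = cA p A θ * TA p A θ + TA p Aᶜ θ / θ := by
  have hA := hsθ2.indicator A
  have hC := hsθ2.indicator Aᶜ
  calc ∑' k : ℕ, (k : ℝ) * pMod p A θ k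
      = ∑' k, (A.indicator (fun k => cA p A θ * ((k : ℝ) * (θ ^ k * p k))) k
          + (Aᶜ).indicator (fun k => ((k : ℝ) * (θ ^ k * p k)) / θ) k) :=
        tsum_congr (kpMod_eq hθ)
    _ = (∑' k : ℕ, A.indicator (fun k => cA p A θ * ((k : ℝ) * (θ ^ k * p k))) k)
          + ∑' k : ℕ, (Aᶜ).indicator (fun k => ((k : ℝ) * (θ ^ k * p k)) / θ) k := by
        refine Summable.tsum_add ?_ ?_
        · rw [indicator_const_mul]; exact hA.mul_left _
        · rw [indicator_div_const]; exact hC.div_const _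
    _ = cA p A θ * TA p A θ + TA p Aᶜ θ / θ := by
        rw [indicator_const_mul, indicator_div_const, tsum_mul_left, tsum_div_const]; rfl

lemma SA_add_compl (hsθ : Summable fun k : ℕ => θ ^ k * p k) :
    SA p A θ + SA p Aᶜ θ = ∑' k : ℕ, θ ^ k * p k := by
  rw [SA, SA, ← Summable.tsum_add (hsθ.indicator A) (hsθ.indicator Aᶜ)]
  exact tsum_congr fun k => Set.indicator_self_add_compl_apply A _ k

lemma TA_add_compl (hsθ2 : Summable fun k : ℕ => (k : ℝ) * (θ ^ k * p k)) :
    TA p A θ + TA p Aᶜ θ = ∑' k : ℕ, (k : ℝ) * (θ ^ k * p k) := by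
  rw [TA, TA, ← Summable.tsum_add (hsθ2.indicator A) (hsθ2.indicator Aᶜ)]
  exact tsum_congr fun k => Set.indicator_self_add_compl_apply A _ k

lemma SA_pos (hp : ∀ k, 0 ≤ p k) (hApos : 0 < ∑' k : ℕ, A.indicator p k)
    (hθ : (0:ℝ) < θ) (hsθ : Summable fun k : ℕ => θ ^ k * p k) :
    0 < SA p A θ := by
  obtain ⟨k0, hk0A, hk0⟩ : ∃ k0 ∈ A, 0 < p k0 := by
    by_contra h
    push_neg at h
    have : ∀ k, A.indicator p k = 0 := by
      intro k
      by_cases hk : k ∈ A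
      · simp [Set.indicator_of_mem hk, le_antisymm (h k hk) (hp k)]
      · simp [Set.indicator_of_notMem hk]
    rw [tsum_congr this, tsum_zero] at hApos
    exact lt_irrefl _ hApos
  have h1 : θ ^ k0 * p k0 ≤ SA p A θ := by
    have := Summable.le_tsum (hsθ.indicator A) k0 (fun j _ => Set.indicator_nonneg
      (fun i _ => mul_nonneg (pow_nonneg hθ.le i) (hp i)) j)
    rwa [Set.indicator_of_mem hk0A] at this
  exact lt_of_lt_of_le (mul_pos (pow_pos hθ k0) hk0) h1

lemma SA_nonneg (hp : ∀ k, 0 ≤ p k) {B : Set ℕ} (hθ : (0:ℝ) ≤ θ) : 0 ≤ SA p B θ :=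
  tsum_nonneg fun k => Set.indicator_nonneg
    (fun i _ => mul_nonneg (pow_nonneg hθ i) (hp i)) k

lemma TA_nonneg (hp : ∀ k, 0 ≤ p k) {B : Set ℕ} (hθ : (0:ℝ) ≤ θ) : 0 ≤ TA p B θ :=
  tsum_nonneg fun k => Set.indicator_nonneg
    (fun i _ => mul_nonneg (Nat.cast_nonneg i) (mul_nonneg (pow_nonneg hθ i) (hp i))) k

end mainlem2

lemma continuousOn_SA (p : ℕ → ℝ) (hp : ∀ k, 0 ≤ p k) (B : Set ℕ) {θ1 : ℝ} (hθ1 : 1 ≤ θ1)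
    (hs1' : Summable fun k : ℕ => θ1 ^ k * p k) :
    ContinuousOn (fun θ => SA p B θ) (Set.Icc 1 θ1) := by
  refine continuousOn_tsum (f := fun k θ => B.indicator (fun j => θ ^ j * p j) k)
    (fun k => ?_) hs1' (fun k θ hθ => ?_)
  · by_cases hk : k ∈ B
    · simp only [Set.indicator_of_mem hk]
      exact ((continuous_pow k).mul continuous_const).continuousOn
    · simp only [Set.indicator_of_notMem hk]
      exact continuousOn_const
  · obtain ⟨hθl, hθr⟩ := hθ
    have hθ0 : (0:ℝ) ≤ θ := zero_le_one.trans hθl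
    beta_reduce
    rw [Real.norm_eq_abs]
    by_cases hk : k ∈ B
    · rw [Set.indicator_of_mem hk, abs_of_nonneg (mul_nonneg (pow_nonneg hθ0 k) (hp k))]
      exact mul_le_mul_of_nonneg_right (pow_le_pow_left₀ hθ0 hθr k) (hp k)
    · rw [Set.indicator_of_notMem hk]
      simpa using mul_nonneg (pow_nonneg (zero_le_one.trans hθ1) k) (hp k)

lemma continuousOn_TA (p : ℕ → ℝ) (hp : ∀ k, 0 ≤ p k) (B : Set ℕ) {θ1 : ℝ} (hθ1 : 1 ≤ θ1)
    (hs2' : Summable fun k : ℕ => (k : ℝ) * (θ1 ^ k * p k)) :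
    ContinuousOn (fun θ => TA p B θ) (Set.Icc 1 θ1) := by
  refine continuousOn_tsum (f := fun k θ => B.indicator (fun j => (j : ℝ) * (θ ^ j * p j)) k)
    (fun k => ?_) hs2' (fun k θ hθ => ?_)
  · by_cases hk : k ∈ B
    · simp only [Set.indicator_of_mem hk]
      exact (continuous_const.mul ((continuous_pow k).mul continuous_const)).continuousOn
    · simp only [Set.indicator_of_notMem hk]
      exact continuousOn_const
  · obtain ⟨hθl, hθr⟩ := hθ
    have hθ0 : (0:ℝ) ≤ θ := zero_le_one.trans hθl
    beta_reduce
    rw [Real.norm_eq_abs]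
    by_cases hk : k ∈ B
    · rw [Set.indicator_of_mem hk, abs_of_nonneg (mul_nonneg (Nat.cast_nonneg k)
        (mul_nonneg (pow_nonneg hθ0 k) (hp k)))]
      exact mul_le_mul_of_nonneg_left
        (mul_le_mul_of_nonneg_right (pow_le_pow_left₀ hθ0 hθr k) (hp k)) (Nat.cast_nonneg k)
    · rw [Set.indicator_of_notMem hk]
      simpa using mul_nonneg (Nat.cast_nonneg k)
        (mul_nonneg (pow_nonneg (zero_le_one.trans hθ1) k) (hp k))

lemma main_lemma (p : ℕ → ℝ) (A : Set ℕ)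
    (hp : ∀ k, 0 ≤ p k) (hpsum : ∑' k, p k = 1)
    (hmean : Summable (fun k : ℕ => (k : ℝ) * p k))
    (hsub : ∑' k : ℕ, (k : ℝ) * p k < 1)
    (hApos : 0 < ∑' k : ℕ, A.indicator p k)
    {θ1 : ℝ} (hθ1 : 1 ≤ θ1)
    (hs1 : Summable fun k : ℕ => p k * θ1 ^ k)
    (hs2 : Summable fun k : ℕ => (k : ℝ) * p k * θ1 ^ k)
    (hGle : ∀ θ : ℝ, 1 ≤ θ → θ ≤ θ1 → Gs p θ ≤ θ)
    (hH : θ1 ≤ Hs p θ1) :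
    ∃ θ ∈ IA p A, (∑' k : ℕ, (k : ℝ) * pMod p A θ k) = 1 := by
  have hθ1pos : (0:ℝ) < θ1 := lt_of_lt_of_le one_pos hθ1
  have hs1' : Summable fun k : ℕ => θ1 ^ k * p k := hs1.congr fun k => mul_comm _ _
  have hs2' : Summable fun k : ℕ => (k : ℝ) * (θ1 ^ k * p k) :=
    hs2.congr fun k => by ring
  -- summability for every θ in [1, θ1]
  have hsθ : ∀ θ : ℝ, 1 ≤ θ → θ ≤ θ1 → Summable fun k : ℕ => θ ^ k * p k := by
    intro θ h1 h2
    have h0 : (0:ℝ) ≤ θ := zero_le_one.trans h1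
    exact hs1'.of_nonneg_of_le (fun k => mul_nonneg (pow_nonneg h0 k) (hp k))
      (fun k => mul_le_mul_of_nonneg_right (pow_le_pow_left₀ h0 h2 k) (hp k))
  have hsθ2 : ∀ θ : ℝ, 1 ≤ θ → θ ≤ θ1 → Summable fun k : ℕ => (k : ℝ) * (θ ^ k * p k) := by
    intro θ h1 h2
    have h0 : (0:ℝ) ≤ θ := zero_le_one.trans h1
    exact hs2'.of_nonneg_of_le
      (fun k => mul_nonneg (Nat.cast_nonneg k) (mul_nonneg (pow_nonneg h0 k) (hp k)))
      (fun k => mul_le_mul_of_nonneg_left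
        (mul_le_mul_of_nonneg_right (pow_le_pow_left₀ h0 h2 k) (hp k)) (Nat.cast_nonneg k))
  -- continuity of FM on [1, θ1]
  have hSAx : ∀ θ : ℝ, 1 ≤ θ → θ ≤ θ1 → 0 < SA p A θ := fun θ h1 h2 =>
    SA_pos hp hApos (lt_of_lt_of_le one_pos h1) (hsθ θ h1 h2)
  have hcont : ContinuousOn (FM p A) (Set.Icc 1 θ1) := by
    have hA := continuousOn_SA p hp A hθ1 hs1'
    have hAc := continuousOn_SA p hp Aᶜ hθ1 hs1'
    have hTA := continuousOn_TA p hp A hθ1 hs2'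
    have hTAc := continuousOn_TA p hp Aᶜ hθ1 hs2'
    have hdenom : ∀ θ ∈ Set.Icc (1:ℝ) θ1, θ * SA p A θ ≠ 0 := by
      intro θ hθ
      exact (mul_pos (lt_of_lt_of_le one_pos hθ.1) (hSAx θ hθ.1 hθ.2)).ne'
    have h1 : ContinuousOn (fun θ : ℝ => (θ - SA p Aᶜ θ) / (θ * SA p A θ)) (Set.Icc 1 θ1) :=
      (continuousOn_id.sub hAc).div (continuousOn_id.mul hA) hdenom
    refine ((h1.mul hTA).add (hTAc.div continuousOn_id ?_))
    intro θ hθ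
    exact (lt_of_lt_of_le one_pos hθ.1).ne'
  -- value at 1
  have hsp : Summable p := by
    by_contra h
    rw [tsum_eq_zero_of_not_summable h] at hpsum
    norm_num at hpsum
  have hs1one : Summable fun k : ℕ => (1:ℝ) ^ k * p k := by simpa using hsp
  have hs2one : Summable fun k : ℕ => (k : ℝ) * ((1:ℝ) ^ k * p k) := by simpa using hmean
  have hF1 : FM p A 1 < 1 := by
    have hsplit := SA_add_compl (p := p) (A := A) hs1one
    have hone : ∑' k : ℕ, (1:ℝ) ^ k * p k = 1 := by simpa using hpsum
    have hSA1 : 0 < SA p A 1 := SA_pos hp hApos one_pos hs1one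
    have hnum : (1:ℝ) - SA p Aᶜ 1 = SA p A 1 := by
      rw [hone] at hsplit; linarith
    have hT := TA_add_compl (p := p) (A := A) hs2one
    have hTval : ∑' k : ℕ, (k : ℝ) * ((1:ℝ) ^ k * p k) = ∑' k : ℕ, (k : ℝ) * p k := by
      simp
    rw [FM, hnum, one_mul, div_self hSA1.ne', one_mul, div_one, hT, hTval]
    exact hsub
  -- value at θ1
  have hFθ1 : 1 ≤ FM p A θ1 := by
    have hS := hSAx θ1 hθ1 le_rfl
    have hC : 0 ≤ SA p Aᶜ θ1 := SA_nonneg hp hθ1pos.le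
    have hTa : 0 ≤ TA p A θ1 := TA_nonneg hp hθ1pos.le
    have hTc : 0 ≤ TA p Aᶜ θ1 := TA_nonneg hp hθ1pos.le
    have hGs : SA p A θ1 + SA p Aᶜ θ1 ≤ θ1 := by
      rw [SA_add_compl hs1']
      have : ∑' k : ℕ, θ1 ^ k * p k = Gs p θ1 := tsum_congr fun k => mul_comm _ _
      rw [this]; exact hGle θ1 hθ1 le_rfl
    have hHs : θ1 ≤ TA p A θ1 + TA p Aᶜ θ1 := by
      rw [TA_add_compl hs2']
      have : ∑' k : ℕ, (k : ℝ) * (θ1 ^ k * p k) = Hs p θ1 := tsum_congr fun k => by ring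
      rw [this]; exact hH
    have h5 : 1 / θ1 ≤ (θ1 - SA p Aᶜ θ1) / (θ1 * SA p A θ1) := by
      rw [div_le_div_iff₀ hθ1pos (by positivity)]
      nlinarith
    have h6 : TA p A θ1 / θ1 ≤ ((θ1 - SA p Aᶜ θ1) / (θ1 * SA p A θ1)) * TA p A θ1 := by
      have := mul_le_mul_of_nonneg_right h5 hTa
      calc TA p A θ1 / θ1 = 1 / θ1 * TA p A θ1 := by ring
        _ ≤ _ := this
    have h7 : 1 ≤ TA p A θ1 / θ1 + TA p Aᶜ θ1 / θ1 := by
      rw [← add_div, le_div_iff₀ hθ1pos, one_mul]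
      exact hHs
    have : TA p A θ1 / θ1 + TA p Aᶜ θ1 / θ1 ≤ FM p A θ1 := by
      rw [FM]; linarith
    linarith
  -- IVT
  obtain ⟨θ, hθI, hθeq⟩ := intermediate_value_Icc hθ1 hcont ⟨hF1.le, hFθ1⟩
  obtain ⟨hθl, hθr⟩ := hθI
  have hθpos : (0:ℝ) < θ := lt_of_lt_of_le one_pos hθl
  have hsθ' := hsθ θ hθl hθr
  have hsθ2' := hsθ2 θ hθl hθr
  have hS := hSAx θ hθl hθr
  have hCle : SA p Aᶜ θ ≤ θ := by
    have h1 : SA p A θ + SA p Aᶜ θ ≤ θ := by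
      rw [SA_add_compl hsθ']
      have : ∑' k : ℕ, θ ^ k * p k = Gs p θ := tsum_congr fun k => mul_comm _ _
      rw [this]; exact hGle θ hθl hθr
    linarith
  have hcA : 0 ≤ cA p A θ := by
    rw [cA_eq]
    exact div_nonneg (by linarith) (by positivity)
  have hsum1 : ∑' k : ℕ, pMod p A θ k = 1 := by
    rw [tsum_pMod hθpos hsθ', cA_eq]
    field_simp
    ring
  have hnn : ∀ k, 0 ≤ pMod p A θ k := by
    intro k
    by_cases hk : k ∈ A
    · simp only [pMod, hk, if_true]
      exact mul_nonneg (mul_nonneg hcA (pow_nonneg hθpos.le k)) (hp k)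
    · simp only [pMod, hk, if_false]
      exact mul_nonneg (zpow_nonneg hθpos.le _) (hp k)
  have hmean1 : ∑' k : ℕ, (k : ℝ) * pMod p A θ k = 1 := by
    have hFMeq : FM p A θ = cA p A θ * TA p A θ + TA p Aᶜ θ / θ := by
      rw [FM, ← cA_eq]
    rw [tsum_kpMod hθpos hsθ2', ← hFMeq]
    exact hθeq
  exact ⟨θ, ⟨hθpos, hnn, hsum1⟩, hmean1⟩

lemma Gs_one {p : ℕ → ℝ} (hpsum : ∑' k, p k = 1) : Gs p 1 = 1 := by
  rw [Gs]; simpa using hpsum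

lemma continuousOn_Gs (p : ℕ → ℝ) (hp : ∀ k, 0 ≤ p k) {b : ℝ}
    (hsb : Summable fun k : ℕ => p k * b ^ k) :
    ContinuousOn (Gs p) (Set.Icc 0 b) := by
  refine continuousOn_tsum (f := fun (k : ℕ) (θ : ℝ) => p k * θ ^ k)
    (fun k => (continuous_const.mul (continuous_pow k)).continuousOn) hsb
    (fun k θ hθ => ?_)
  rw [Real.norm_eq_abs, abs_of_nonneg (mul_nonneg (hp k) (pow_nonneg hθ.1 k))]
  exact mul_le_mul_of_nonneg_left (pow_le_pow_left₀ hθ.1 hθ.2 k) (hp k)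

lemma continuousOn_Hs (p : ℕ → ℝ) (hp : ∀ k, 0 ≤ p k) {t : ℝ}
    (hst : Summable fun k : ℕ => (k : ℝ) * p k * t ^ k) :
    ContinuousOn (Hs p) (Set.Icc 0 t) := by
  refine continuousOn_tsum (f := fun (k : ℕ) (θ : ℝ) => (k : ℝ) * p k * θ ^ k)
    (fun k => (continuous_const.mul (continuous_pow k)).continuousOn) hst
    (fun k θ hθ => ?_)
  rw [Real.norm_eq_abs, abs_of_nonneg (mul_nonneg (mul_nonneg (Nat.cast_nonneg k) (hp k))
    (pow_nonneg hθ.1 k))]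
  exact mul_le_mul_of_nonneg_left (pow_le_pow_left₀ hθ.1 hθ.2 k)
    (mul_nonneg (Nat.cast_nonneg k) (hp k))

set_option maxHeartbeats 1000000 in
lemma cross_case (p : ℕ → ℝ) (hp : ∀ k, 0 ≤ p k) (hpsum : ∑' k, p k = 1)
    (hmean : Summable (fun k : ℕ => (k : ℝ) * p k))
    (hsub : ∑' k : ℕ, (k : ℝ) * p k < 1)
    {b : ℝ} (hb : 1 < b) (hsb : Summable fun k : ℕ => p k * b ^ k) (hcb : b ≤ Gs p b) :
    ∃ θ1 : ℝ, 1 ≤ θ1 ∧ (Summable fun k : ℕ => p k * θ1 ^ k) ∧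
      (Summable fun k : ℕ => (k : ℝ) * p k * θ1 ^ k) ∧
      (∀ θ : ℝ, 1 ≤ θ → θ ≤ θ1 → Gs p θ ≤ θ) ∧ θ1 ≤ Hs p θ1 := by
  have hb0 : (0:ℝ) < b := lt_trans one_pos hb
  set r0 : ℝ := (1 + b) / 2 with hr0def
  have hr01 : 1 < r0 := by rw [hr0def]; linarith
  have hr0b : r0 < b := by rw [hr0def]; linarith
  have hsr0 : Summable fun k : ℕ => (k : ℝ) * p k * r0 ^ k :=
    summable_kpow_of_lt hp (by linarith) hr0b hsb
  have hHcont : ContinuousOn (Hs p) (Set.Icc 0 r0) := continuousOn_Hs p hp hsr0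
  have hGcont : ContinuousOn (Gs p) (Set.Icc 0 b) := continuousOn_Gs p hp hsb
  have hHs1 : Hs p 1 < 1 := by
    have : Hs p 1 = ∑' k : ℕ, (k : ℝ) * p k := by rw [Hs]; simp
    rw [this]; exact hsub
  -- find ε > 0 with Hs < 1 on [1, 1+ε]
  have hcw : ContinuousWithinAt (Hs p) (Set.Icc 0 r0) 1 :=
    hHcont 1 ⟨zero_le_one, hr01.le⟩
  have hev : (Hs p) ⁻¹' (Set.Iio 1) ∈ nhdsWithin 1 (Set.Icc (0:ℝ) r0) :=
    hcw (Iio_mem_nhds hHs1)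
  rw [Metric.mem_nhdsWithin_iff] at hev
  obtain ⟨δ₀, hδ₀, hball⟩ := hev
  set ε : ℝ := min (δ₀ / 2) (r0 - 1) with hεdef
  have hε : 0 < ε := lt_min (by linarith) (by linarith)
  have hεr : 1 + ε ≤ r0 := by
    have : ε ≤ r0 - 1 := min_le_right _ _
    linarith
  have hHlt : ∀ θ : ℝ, 1 ≤ θ → θ ≤ 1 + ε → Hs p θ < 1 := by
    intro θ h1 h2
    have hmem : θ ∈ Metric.ball (1:ℝ) δ₀ ∩ Set.Icc 0 r0 := by
      constructor
      · rw [Metric.mem_ball, Real.dist_eq, abs_of_nonneg (by linarith)]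
        have : ε ≤ δ₀ / 2 := min_le_left _ _
        linarith
      · exact ⟨by linarith, by linarith⟩
    exact hball hmem
  -- Gs ≤ id on [1, 1+ε]
  have hGsmall : ∀ θ : ℝ, 1 ≤ θ → θ ≤ 1 + ε → Gs p θ ≤ θ := by
    intro θ h1 h2
    have hθb : θ ≤ b := by linarith
    have hθ0 : (0:ℝ) < θ := lt_of_lt_of_le one_pos h1
    have hsl := slope_ineq hp zero_le_one h1
      (summable_pow_of_le hp hθ0.le hθb hsb)
      (summable_kpow_of_lt hp hθ0.le (by linarith) hsb)
    rw [Gs_one hpsum] at hsl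
    have hH := hHlt θ h1 h2
    nlinarith
  -- the crossing point
  set c : ℝ := 1 + ε with hcdef
  have hc1 : 1 < c := by rw [hcdef]; linarith
  have hcb' : c ≤ b := by rw [hcdef]; linarith
  set K : Set ℝ := Set.Icc c b ∩ (fun θ => Gs p θ - θ) ⁻¹' (Set.Ici 0) with hKdef
  have hKcl : IsClosed K :=
    ((hGcont.mono (Set.Icc_subset_Icc (by linarith) le_rfl)).sub
      continuousOn_id).preimage_isClosed_of_isClosed isClosed_Icc isClosed_Ici
  have hKcpt : IsCompact K := isCompact_Icc.of_isClosed_subset hKcl Set.inter_subset_left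
  have hbK : b ∈ K := ⟨⟨hcb', le_rfl⟩, by simp [sub_nonneg, hcb]⟩
  set θs : ℝ := sInf K with hθsdef
  have hθsK : θs ∈ K := hKcpt.sInf_mem ⟨b, hbK⟩
  obtain ⟨⟨hθsc, hθsb⟩, hθsG⟩ := hθsK
  have hGθs : θs ≤ Gs p θs := by simpa [sub_nonneg] using hθsG
  have hθs1 : 1 < θs := lt_of_lt_of_le hc1 hθsc
  -- Gs ≤ id strictly below θs
  have hmid : ∀ θ : ℝ, 1 ≤ θ → θ < θs → Gs p θ ≤ θ := by
    intro θ h1 h2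
    by_cases hθc : θ ≤ c
    · exact hGsmall θ h1 hθc
    · push_neg at hθc
      have hnK : θ ∉ K := fun hK => absurd (csInf_le hKcpt.bddBelow hK) (not_le.mpr h2)
      have hmem : θ ∈ Set.Icc c b := ⟨hθc.le, le_trans h2.le hθsb⟩
      by_contra hcon
      push_neg at hcon
      exact hnK ⟨hmem, by simp [sub_nonneg]; linarith⟩
  -- find θc with θc ≤ Hs p θc below θs
  have key : ∃ θc : ℝ, 1 ≤ θc ∧ θc < θs ∧ θc ≤ Hs p θc := by
    by_contra hno
    push_neg at hno
    set θ0 : ℝ := (1 + θs) / 2 with hθ0def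
    have h1θ0 : 1 < θ0 := by rw [hθ0def]; linarith
    have hθ0s : θ0 < θs := by rw [hθ0def]; linarith
    have hθ0b : θ0 < b := lt_of_lt_of_le hθ0s hθsb
    have hθ00 : (0:ℝ) < θ0 := lt_trans one_pos h1θ0
    have hHθ0 : Hs p θ0 < θ0 := hno θ0 h1θ0.le hθ0s
    have hHθ0nn : 0 ≤ Hs p θ0 := tsum_nonneg fun k =>
      mul_nonneg (mul_nonneg (Nat.cast_nonneg k) (hp k)) (pow_nonneg hθ00.le k)
    set δ : ℝ := (θ0 - 1) * (θ0 - Hs p θ0) / θ0 with hδdef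
    have hδpos : 0 < δ := by
      rw [hδdef]
      have h1 : 0 < θ0 - 1 := by linarith
      have h2 : 0 < θ0 - Hs p θ0 := by linarith
      positivity
    have hδeq : δ * θ0 = (θ0 - 1) * (θ0 - Hs p θ0) := by
      rw [hδdef]; field_simp
    -- slope bound from 1 to θ0
    have hA := slope_ineq hp zero_le_one h1θ0.le
      (summable_pow_of_le hp hθ00.le hθ0b.le hsb)
      (summable_kpow_of_lt hp hθ00.le hθ0b hsb)
    rw [Gs_one hpsum] at hA
    -- uniform bound Gs θ ≤ θ - δ on [θ0, θs)
    have hbound : ∀ θ : ℝ, θ0 ≤ θ → θ < θs → Gs p θ ≤ θ - δ := by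
      intro θ hθ0θ hθθs
      have hθb : θ < b := lt_of_lt_of_le hθθs hθsb
      have hθ0' : (0:ℝ) < θ := lt_of_lt_of_le hθ00 hθ0θ
      have hB := slope_ineq hp hθ00.le hθ0θ
        (summable_pow_of_le hp hθ0'.le hθb.le hsb)
        (summable_kpow_of_lt hp hθ0'.le hθb hsb)
      have hHθ : Hs p θ < θ := hno θ (le_trans h1θ0.le hθ0θ) hθθs
      have hB' : Gs p θ ≤ Gs p θ0 + (θ - θ0) := by nlinarith
      nlinarith [mul_le_mul_of_nonneg_left hB' hθ00.le]
    -- pass to the limit θ ↑ θs on partial sums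
    have hpart : ∀ F : Finset ℕ, ∑ k ∈ F, p k * θs ^ k ≤ θs - δ := by
      intro F
      have htends : Filter.Tendsto (fun θ : ℝ => ∑ k ∈ F, p k * θ ^ k)
          (nhdsWithin θs (Set.Iio θs)) (nhds (∑ k ∈ F, p k * θs ^ k)) :=
        ((continuous_finset_sum F fun k _ =>
          continuous_const.mul (continuous_pow k)).tendsto θs).mono_left nhdsWithin_le_nhds
      have hlim2 : Filter.Tendsto (fun θ : ℝ => θ - δ)
          (nhdsWithin θs (Set.Iio θs)) (nhds (θs - δ)) :=
        ((continuous_id.sub continuous_const).tendsto θs).mono_left nhdsWithin_le_nhds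
      refine le_of_tendsto_of_tendsto htends hlim2 ?_
      filter_upwards [Ioo_mem_nhdsLT hθ0s] with θ hθ
      have hθ0'' : (0:ℝ) ≤ θ := by
        have := hθ.1; linarith
      have hsum := summable_pow_of_le hp hθ0'' (le_trans hθ.2.le hθsb) hsb
      exact le_trans (Summable.sum_le_tsum F (fun k _ =>
        mul_nonneg (hp k) (pow_nonneg hθ0'' k)) hsum) (hbound θ hθ.1.le hθ.2)
    have hGstar : Gs p θs ≤ θs - δ := by
      have hδθs : δ ≤ θ0 - 1 := by
        rw [hδdef, div_le_iff₀ hθ00]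
        nlinarith
      exact tsum_le_of_sum_le' (by linarith) hpart
    linarith
  obtain ⟨θc, hθc1, hθcs, hHc⟩ := key
  have hθcb : θc < b := lt_of_lt_of_le hθcs hθsb
  have hθc0 : (0:ℝ) ≤ θc := zero_le_one.trans hθc1
  exact ⟨θc, hθc1, summable_pow_of_le hp hθc0 hθcb.le hsb,
    summable_kpow_of_lt hp hθc0 hθcb hsb,
    fun θ h1 h2 => hmid θ h1 (lt_of_le_of_lt h2 hθcs), hHc⟩


theorem stmt6 (p : ℕ → ℝ) (A : Set ℕ)
    (hp : ∀ k, 0 ≤ p k) (hpsum : ∑' k, p k = 1)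
    (hp0 : 0 < p 0) (hp01 : p 0 + p 1 < 1)
    (hmean : Summable (fun k : ℕ => (k : ℝ) * p k))
    (hsub : ∑' k : ℕ, (k : ℝ) * p k < 1)
    (hApos : 0 < ∑' k : ℕ, A.indicator p k)
    -- either the radius of convergence `ρ` of the generating function is `+∞`,
    -- or it is finite and `g'(ρ) ≥ 1` (possibly `g'(ρ) = +∞`).
    (hrad : (∀ r : ℝ, Summable (fun k : ℕ => p k * r ^ k))
      ∨ (∃ ρ : ℝ, 0 < ρ
          ∧ (∀ r : ℝ, 0 ≤ r → r < ρ → Summable (fun k : ℕ => p k * r ^ k))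
          ∧ (∀ r : ℝ, ρ < r → ¬ Summable (fun k : ℕ => p k * r ^ k))
          ∧ (¬ Summable (fun k : ℕ => (k : ℝ) * p k * ρ ^ (k - 1))
              ∨ 1 ≤ ∑' k : ℕ, (k : ℝ) * p k * ρ ^ (k - 1)))) :
    -- `p` is generic for `A`
    ∃ θ ∈ IA p A, (∑' k : ℕ, (k : ℝ) * pMod p A θ k) = 1 := by
  rcases hrad with hall | ⟨ρ, hρpos, hlt, hgt, halt⟩
  · -- infinite radius of convergence: the generating function crosses the diagonal
    obtain ⟨m, hm2, hpm⟩ : ∃ m : ℕ, 2 ≤ m ∧ 0 < p m := by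
      by_contra h
      push_neg at h
      have hz : ∀ m : ℕ, m ∉ ({0, 1} : Finset ℕ) → p m = 0 := by
        intro m hm
        have h2 : 2 ≤ m := by
          rcases m with _ | _ | m
          · simp at hm
          · simp at hm
          · omega
        exact le_antisymm (h m h2) (hp m)
      have : ∑' k, p k = p 0 + p 1 := by
        rw [tsum_eq_sum hz]
        simp
      rw [hpsum] at this
      linarith
    set b : ℝ := max 2 (p m)⁻¹ with hbdef
    have hb2 : (2:ℝ) ≤ b := le_max_left _ _
    have hb1 : 1 < b := by linarith
    have hb0 : (0:ℝ) < b := by linarith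
    have hbinv : (p m)⁻¹ ≤ b := le_max_right _ _
    have hsb : Summable fun k : ℕ => p k * b ^ k := hall b
    have hGb : b ≤ Gs p b := by
      have h1 : p m * b ^ m ≤ Gs p b :=
        Summable.le_tsum hsb m (fun j _ => mul_nonneg (hp j) (pow_nonneg hb0.le j))
      have h2 : b ≤ p m * b ^ m := by
        calc b = p m * ((p m)⁻¹ * b) := by field_simp
          _ ≤ p m * (b * b) :=
            mul_le_mul_of_nonneg_left (mul_le_mul_of_nonneg_right hbinv hb0.le) hpm.le
          _ = p m * b ^ 2 := by ring
          _ ≤ p m * b ^ m :=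
            mul_le_mul_of_nonneg_left (pow_le_pow_right₀ hb1.le hm2) hpm.le
      linarith
    obtain ⟨θ1, ht1, hts1, hts2, htG, htH⟩ :=
      cross_case p hp hpsum hmean hsub hb1 hsb hGb
    exact main_lemma p A hp hpsum hmean hsub hApos ht1 hts1 hts2 htG htH
  · -- finite radius ρ
    have hsp : Summable p := by
      by_contra h
      rw [tsum_eq_zero_of_not_summable h] at hpsum
      norm_num at hpsum
    have hρ1 : 1 < ρ := by
      rcases lt_trichotomy ρ 1 with h | h | h
      · exact absurd (by simpa using hsp) (hgt 1 h)
      · rcases halt with hns | hge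
        · refine absurd hmean ?_
          rw [h] at hns
          simpa using hns
        · rw [h] at hge
          simp only [one_pow, mul_one] at hge
          linarith
      · exact h
    by_cases hC : ∃ b : ℝ, 1 < b ∧ (Summable fun k : ℕ => p k * b ^ k) ∧ b ≤ Gs p b
    · obtain ⟨b, hb1, hsb, hGb⟩ := hC
      obtain ⟨θ1, ht1, hts1, hts2, htG, htH⟩ :=
        cross_case p hp hpsum hmean hsub hb1 hsb hGb
      exact main_lemma p A hp hpsum hmean hsub hApos ht1 hts1 hts2 htG htH
    · push_neg at hC
      rcases halt with hns | hge
      · -- derivative diverges at ρ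
        have key : ∃ θc : ℝ, 1 < θc ∧ θc < ρ ∧ θc ≤ Hs p θc := by
          by_contra hno
          push_neg at hno
          refine hns (summable_of_sum_le (c := 1) (fun k => mul_nonneg
            (mul_nonneg (Nat.cast_nonneg k) (hp k)) (pow_nonneg hρpos.le _)) (fun F => ?_))
          have htends : Filter.Tendsto (fun θ : ℝ => ∑ k ∈ F, (k : ℝ) * p k * θ ^ (k - 1))
              (nhdsWithin ρ (Set.Iio ρ)) (nhds (∑ k ∈ F, (k : ℝ) * p k * ρ ^ (k - 1))) :=
            ((continuous_finset_sum F fun k _ =>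
              (continuous_const.mul continuous_const).mul (continuous_pow (k - 1))).tendsto
                ρ).mono_left nhdsWithin_le_nhds
          refine le_of_tendsto htends ?_
          filter_upwards [Ioo_mem_nhdsLT hρ1] with θ hθ
          have hθ1' : 1 < θ := hθ.1
          have hθρ : θ < ρ := hθ.2
          have hθ0 : (0:ℝ) < θ := lt_trans one_pos hθ1'
          have hHθ : Hs p θ < θ := hno θ hθ1' hθρ
          set t : ℝ := (θ + ρ) / 2 with htdef
          have hts2 : Summable (fun k : ℕ => (k : ℝ) * p k * θ ^ k) :=
            summable_kpow_of_lt hp hθ0.le (by rw [htdef]; linarith)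
              (hlt t (by rw [htdef]; linarith) (by rw [htdef]; linarith))
          have heq : ∑ k ∈ F, (k : ℝ) * p k * θ ^ (k - 1)
              = (∑ k ∈ F, (k : ℝ) * p k * θ ^ k) / θ := by
            rw [Finset.sum_div]
            refine Finset.sum_congr rfl fun k _ => ?_
            cases k with
            | zero => simp
            | succ n =>
              rw [Nat.add_sub_cancel, pow_succ]
              field_simp
          rw [heq, div_le_one hθ0]
          have h2 : ∑ k ∈ F, (k : ℝ) * p k * θ ^ k ≤ Hs p θ :=
            Summable.sum_le_tsum F (fun k _ => mul_nonneg
              (mul_nonneg (Nat.cast_nonneg k) (hp k)) (pow_nonneg hθ0.le k)) hts2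
          linarith
        obtain ⟨θc, hθc1, hθcρ, hHc⟩ := key
        have hθc0 : (0:ℝ) < θc := lt_trans one_pos hθc1
        set t : ℝ := (θc + ρ) / 2 with htdef
        have hs1 : Summable fun k : ℕ => p k * θc ^ k := hlt θc hθc0.le hθcρ
        have hs2 : Summable fun k : ℕ => (k : ℝ) * p k * θc ^ k :=
          summable_kpow_of_lt hp hθc0.le (by rw [htdef]; linarith)
            (hlt t (by rw [htdef]; linarith) (by rw [htdef]; linarith))
        have hGle : ∀ θ : ℝ, 1 ≤ θ → θ ≤ θc → Gs p θ ≤ θ := by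
          intro θ h1 h2
          rcases eq_or_lt_of_le h1 with he | hl
          · rw [← he, Gs_one hpsum]
          · exact (hC θ hl (hlt θ (by linarith) (lt_of_le_of_lt h2 hθcρ))).le
        exact main_lemma p A hp hpsum hmean hsub hApos hθc1.le hs1 hs2 hGle hHc
      · -- derivative summable at ρ, with value ≥ 1
        have hsum' : Summable (fun k : ℕ => (k : ℝ) * p k * ρ ^ (k - 1)) := by
          by_contra h
          rw [tsum_eq_zero_of_not_summable h] at hge
          norm_num at hge
        have hfun : (fun k : ℕ => (k : ℝ) * p k * ρ ^ k)
            = (fun k : ℕ => ρ * ((k : ℝ) * p k * ρ ^ (k - 1))) := by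
          funext k
          cases k with
          | zero => simp
          | succ n => rw [Nat.add_sub_cancel, pow_succ]; ring
        have hs2 : Summable (fun k : ℕ => (k : ℝ) * p k * ρ ^ k) := by
          rw [hfun]; exact hsum'.mul_left ρ
        have hs1 : Summable (fun k : ℕ => p k * ρ ^ k) :=
          summable_pow_of_kpow hp hρpos.le hs2
        have hH : ρ ≤ Hs p ρ := by
          calc ρ = ρ * 1 := (mul_one ρ).symm
            _ ≤ ρ * ∑' k : ℕ, (k : ℝ) * p k * ρ ^ (k - 1) :=
              mul_le_mul_of_nonneg_left hge hρpos.le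
            _ = ∑' k : ℕ, ρ * ((k : ℝ) * p k * ρ ^ (k - 1)) := tsum_mul_left.symm
            _ = Hs p ρ := by rw [Hs, hfun]
        have hGle : ∀ θ : ℝ, 1 ≤ θ → θ ≤ ρ → Gs p θ ≤ θ := by
          intro θ h1 h2
          rcases eq_or_lt_of_le h1 with he | hl
          · rw [← he, Gs_one hpsum]
          · rcases eq_or_lt_of_le h2 with he2 | hl2
            · rw [he2]; exact (hC ρ hρ1 hs1).le
            · exact (hC θ hl (hlt θ (by linarith) hl2)).le
        exact main_lemma p A hp hpsum hmean hsub hApos hρ1.le hs1 hs2 hGle hH
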